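/- arXiv:2004.14170 — 2 statements merged into one kernel-verified Lean document; each statement's English description precedes it below -/
import Mathlib

section
/- Let x_1,...,x_K and y_1,...,y_K be nonnegative real numbers. For any q ∈ {1,...,K} and any t ∈ {1,...,q}, the q-th smallest element of the multiset {x_k y_k : k ∈ [K]} is at least the product of the t-th smallest element of {x_k} and the (q-t+1)-th smallest element of {y_k}. -/
open Finset in
lemma sort_lower_aux (K : ℕ) (f : Fin K → ℝ) (i : Fin K) :
    K - (i : ℕ) ≤ (univ.filter (fun k => f (Tuple.sort f i) ≤ f k)).card := by
  have h : (Finset.Ici i).card ≤ (univ.filter (fun k => f (Tuple.sort f i) ≤ f k)).card := by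
    apply Finset.card_le_card_of_injOn (Tuple.sort f)
    · intro j hj
      simp only [Finset.mem_coe, Finset.mem_Ici] at hj
      simp only [Finset.mem_coe, Finset.mem_filter, Finset.mem_univ, true_and]
      exact Tuple.monotone_sort f hj
    · exact fun a _ b _ h => (Tuple.sort f).injective h
  rwa [Fin.card_Ici] at h

open Finset in
lemma sort_upper_aux (K : ℕ) (f : Fin K → ℝ) (i : Fin K) :
    (i : ℕ) + 1 ≤ (univ.filter (fun k => f k ≤ f (Tuple.sort f i))).card := by
  have h : (Finset.Iic i).card ≤ (univ.filter (fun k => f k ≤ f (Tuple.sort f i))).card := by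
    apply Finset.card_le_card_of_injOn (Tuple.sort f)
    · intro j hj
      simp only [Finset.mem_coe, Finset.mem_Iic] at hj
      simp only [Finset.mem_coe, Finset.mem_filter, Finset.mem_univ, true_and]
      exact Tuple.monotone_sort f hj
    · exact fun a _ b _ h => (Tuple.sort f).injective h
  rwa [Fin.card_Iic] at h

open Finset in
lemma card_inter_lower {K : ℕ} (s t : Finset (Fin K)) :
    s.card + t.card - K ≤ (s ∩ t).card := by
  have h1 := Finset.card_union_add_card_inter s t
  have h2 : (s ∪ t).card ≤ K := by
    simpa using Finset.card_le_card (Finset.subset_univ (s ∪ t))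
  omega

/-- For nonnegative reals `x₁,…,x_K` and `y₁,…,y_K`, the `q`-th smallest element of
`{x_k * y_k}` is at least the product of the `t`-th smallest of `{x_k}` and the
`(q-t+1)`-th smallest of `{y_k}`, for all `1 ≤ t ≤ q ≤ K`. -/
theorem stmt_1 (K : ℕ) (hK : 0 < K) (x y : Fin K → ℝ)
    (hx : ∀ k, 0 ≤ x k) (hy : ∀ k, 0 ≤ y k)
    (q t : ℕ) (ht : 1 ≤ t) (htq : t ≤ q) (hq : q ≤ K) :
    x (Tuple.sort x ⟨t - 1, by omega⟩) * y (Tuple.sort y ⟨q - t, by omega⟩) ≤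
      (fun k => x k * y k) (Tuple.sort (fun k => x k * y k) ⟨q - 1, by omega⟩) := by
  set a := x (Tuple.sort x ⟨t - 1, by omega⟩) with ha
  set b := y (Tuple.sort y ⟨q - t, by omega⟩) with hb
  set z := fun k => x k * y k with hz
  set c := z (Tuple.sort z ⟨q - 1, by omega⟩) with hc
  set A := Finset.univ.filter (fun k => a ≤ x k) with hA
  set B := Finset.univ.filter (fun k => b ≤ y k) with hB
  set S := Finset.univ.filter (fun k => z k ≤ c) with hS
  have hAc : K - (t - 1) ≤ A.card := sort_lower_aux K x ⟨t - 1, by omega⟩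
  have hBc : K - (q - t) ≤ B.card := sort_lower_aux K y ⟨q - t, by omega⟩
  have hSc : (q - 1) + 1 ≤ S.card := sort_upper_aux K z ⟨q - 1, by omega⟩
  have hAB : A.card + B.card - K ≤ (A ∩ B).card := card_inter_lower A B
  have hABS : (A ∩ B).card + S.card - K ≤ ((A ∩ B) ∩ S).card := card_inter_lower _ S
  have hne : 0 < ((A ∩ B) ∩ S).card := by omega
  obtain ⟨k, hk⟩ := Finset.card_pos.mp hne
  simp only [Finset.mem_inter, hA, hB, hS, Finset.mem_filter, Finset.mem_univ, true_and] at hk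
  obtain ⟨⟨hka, hkb⟩, hkc⟩ := hk
  calc a * b ≤ x k * y k := mul_le_mul hka hkb (hy _) ((hx _).trans hka)
    _ ≤ c := hkc
end

section
/- Fix integers K ≥ 1, M ≥ 1, r with 1 ≤ r ≤ K, q with 1 ≤ q ≤ K, and a real μ ∈ (0,1]. Define τ_a^c(r,q) = M r μ (H_K − H_{K−q})/K and τ_l^c(r,q) = max_{t∈[q]} (H_K − H_{K−q+t−1}) · max(r−K+t, 0) · M μ / t. Suppose n_1, n_2 are integers with 0 ≤ n_1 < q/2, n_2 ≥ 1, r ≥ K − n_1, q ≤ K(1 − 1/n_2) + 1, and q is even. Then τ_a^c(r,q)/τ_l^c(r,q) ≤ (1+n_1)(1+n_2). -/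
set_option maxHeartbeats 1000000 in
/-- Multiplicative gap between the achievable NCT `τ_a^c = M r μ (H_K - H_{K-q})/K`
and the lower bound `τ_l^c = max_{t∈[q]} (H_K - H_{K-q+t-1})·(r-K+t)⁺·Mμ/t`:
if `r ≥ K - n₁`, `q ≤ K(1 - 1/n₂) + 1`, `0 ≤ n₁ < q/2`, `n₂ ≥ 1` and `q` is even,
then `τ_a^c/τ_l^c ≤ (1+n₁)(1+n₂)`. -/
theorem stmt_4 (K M r q : ℕ) (hK : 1 ≤ K) (hM : 1 ≤ M) (hr1 : 1 ≤ r) (hr2 : r ≤ K)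
    (hq1 : 1 ≤ q) (hq2 : q ≤ K) (μ : ℝ) (hμ0 : 0 < μ) (hμ1 : μ ≤ 1)
    (H : ℕ → ℝ) (hH : ∀ n, H n = ∑ k ∈ Finset.range n, (1 : ℝ) / (k + 1))
    (n₁ n₂ : ℕ) (hn₁ : (n₁ : ℝ) < q / 2) (hn₂ : 1 ≤ n₂)
    (hrn : K - n₁ ≤ r) (hqn : (q : ℝ) ≤ K * (1 - 1 / n₂) + 1) (hqeven : Even q) :
    ((M : ℝ) * r * μ * (H K - H (K - q)) / K) /
      ((Finset.Icc 1 q).sup' (Finset.nonempty_Icc.mpr hq1)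
        (fun t => (H K - H (K - q + t - 1)) * max ((r : ℝ) - K + t) 0 * M * μ / t)) ≤
      (1 + (n₁ : ℝ)) * (1 + (n₂ : ℝ)) := by
  have hq2' : 2 ≤ q := by rcases hqeven with ⟨m, hm⟩; omega
  set t : ℕ := q / 2 with ht_def
  have h2t : 2 * t = q := by rcases hqeven with ⟨m, hm⟩; omega
  have ht1 : 1 ≤ t := by omega
  have htq : t ≤ q := by omega
  have hqR : (q : ℝ) = 2 * t := by exact_mod_cast h2t.symm
  have hn1t : n₁ < t := by
    have h : (n₁ : ℝ) < (t : ℝ) := by linarith [hn₁]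
    exact_mod_cast h
  have hn1tR : (n₁ : ℝ) + 1 ≤ t := by exact_mod_cast Nat.succ_le_of_lt hn1t
  have hKrn : K ≤ r + n₁ := by omega
  have hKrnR : (K : ℝ) ≤ r + n₁ := by exact_mod_cast hKrn
  have hrKR : (r : ℝ) ≤ K := by exact_mod_cast hr2
  have hqKR : (q : ℝ) ≤ K := by exact_mod_cast hq2
  have hKpos : (0 : ℝ) < K := by exact_mod_cast hK
  have htpos : (0 : ℝ) < t := by exact_mod_cast ht1
  have hMpos : (0 : ℝ) < M := by exact_mod_cast hM
  have hn2R : (1 : ℝ) ≤ n₂ := by exact_mod_cast hn₂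
  have hn2pos : (0 : ℝ) < n₂ := by linarith
  -- e := r - K + t > 0
  have he_lb : (t : ℝ) - n₁ ≤ (r : ℝ) - K + t := by linarith
  have he_pos : (0 : ℝ) < (r : ℝ) - K + t := by linarith
  have hemax : max ((r : ℝ) - K + t) 0 = (r : ℝ) - K + t := max_eq_left he_pos.le
  -- the index a
  set a : ℕ := K - q + t - 1 with ha_def
  have haK : a ≤ K := by omega
  have haq : K - q ≤ a := by omega
  have haltK : a < K := by omega
  -- sums
  have hs1 : H K - H (K - q) = ∑ k ∈ Finset.Ico (K - q) K, (1 : ℝ) / (k + 1) := by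
    rw [hH, hH]; exact (Finset.sum_Ico_eq_sub _ (by omega)).symm
  have hst : H K - H a = ∑ k ∈ Finset.Ico a K, (1 : ℝ) / (k + 1) := by
    rw [hH, hH]; exact (Finset.sum_Ico_eq_sub _ haK).symm
  set St : ℝ := ∑ k ∈ Finset.Ico a K, (1 : ℝ) / (k + 1) with hSt_def
  set S1 : ℝ := ∑ k ∈ Finset.Ico (K - q) K, (1 : ℝ) / (k + 1) with hS1_def
  have hSt_pos : 0 < St := Finset.sum_pos (fun k _ => by positivity)
    (Finset.nonempty_Ico.mpr haltK)
  have hsplit : S1 = (∑ k ∈ Finset.Ico (K - q) a, (1 : ℝ) / (k + 1)) + St := by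
    rw [hS1_def, hSt_def, Finset.sum_Ico_consecutive _ haq haK]
  set mid : ℝ := ∑ k ∈ Finset.Ico (K - q) a, (1 : ℝ) / (k + 1) with hmid_def
  have hc_pos : (0 : ℝ) < (K : ℝ) - q + 1 := by linarith
  -- upper bound on mid : c * mid ≤ t - 1
  have hmid_ub : ((K : ℝ) - q + 1) * mid ≤ (t : ℝ) - 1 := by
    have hb : ∀ k ∈ Finset.Ico (K - q) a, (1 : ℝ) / (k + 1) ≤ 1 / ((K : ℝ) - q + 1) := by
      intro k hk
      rw [Finset.mem_Ico] at hk
      apply one_div_le_one_div_of_le hc_pos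
      have h1 : ((K - q : ℕ) : ℝ) ≤ k := Nat.cast_le.mpr hk.1
      have h2 : ((K - q : ℕ) : ℝ) = (K : ℝ) - q := by
        rw [Nat.cast_sub hq2]
      linarith
    have := Finset.sum_le_card_nsmul _ _ _ hb
    rw [Nat.card_Ico, nsmul_eq_mul] at this
    have hcard : ((a - (K - q) : ℕ) : ℝ) = (t : ℝ) - 1 := by
      have : a - (K - q) = t - 1 := by omega
      rw [this, Nat.cast_sub ht1]; norm_num
    rw [hcard] at this
    rw [mul_comm]
    calc mid * ((K : ℝ) - q + 1) ≤ (((t : ℝ) - 1) * (1 / ((K : ℝ) - q + 1))) * ((K : ℝ) - q + 1) := by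
          apply mul_le_mul_of_nonneg_right this hc_pos.le
      _ = (t : ℝ) - 1 := by field_simp
  have hmid_nonneg : 0 ≤ mid := Finset.sum_nonneg (fun k _ => by positivity)
  -- lower bound on St : (t-1) ≤ K * St
  have hSt_lb : (t : ℝ) - 1 ≤ (K : ℝ) * St := by
    have hb : ∀ k ∈ Finset.Ico a K, (1 : ℝ) / K ≤ 1 / (k + 1) := by
      intro k hk
      rw [Finset.mem_Ico] at hk
      apply one_div_le_one_div_of_le (by positivity)
      have : (k : ℝ) + 1 ≤ K := by exact_mod_cast Nat.succ_le_of_lt hk.2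
      linarith
    have := Finset.card_nsmul_le_sum _ _ _ hb
    rw [Nat.card_Ico, nsmul_eq_mul] at this
    have hcard : (t : ℝ) - 1 ≤ ((K - a : ℕ) : ℝ) := by
      have h1 : t - 1 ≤ K - a := by omega
      have h2 : ((t - 1 : ℕ) : ℝ) = (t : ℝ) - 1 := by
        rw [Nat.cast_sub ht1]; norm_num
      calc (t : ℝ) - 1 = ((t - 1 : ℕ) : ℝ) := h2.symm
        _ ≤ ((K - a : ℕ) : ℝ) := Nat.cast_le.mpr h1
    have h3 : ((t : ℝ) - 1) * (1 / K) ≤ St := le_trans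
      (mul_le_mul_of_nonneg_right hcard (by positivity)) this
    calc (t : ℝ) - 1 = (((t : ℝ) - 1) * (1 / K)) * K := by field_simp
      _ ≤ St * K := mul_le_mul_of_nonneg_right h3 hKpos.le
      _ = K * St := mul_comm _ _
  -- K ≤ n₂ (K - q + 1)
  have hKle : (K : ℝ) ≤ n₂ * ((K : ℝ) - q + 1) := by
    rw [← div_le_iff₀' hn2pos]
    have h : (K : ℝ) * (1 - 1 / n₂) = K - K / n₂ := by ring
    linarith [hqn]
  -- S1 ≤ (1 + n₂) St
  have hS1_le : S1 ≤ (1 + (n₂ : ℝ)) * St := by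
    have h2 : ((K : ℝ) - q + 1) * mid ≤ ((K : ℝ) - q + 1) * ((n₂ : ℝ) * St) := by
      nlinarith [mul_le_mul_of_nonneg_right hKle hSt_pos.le]
    have h3 : mid ≤ (n₂ : ℝ) * St := le_of_mul_le_mul_left h2 hc_pos
    linarith [hsplit]
  have hS1_pos : 0 < S1 := by linarith [hsplit]
  -- t ≤ (1+n₁)(r-K+t)
  have h5 : (t : ℝ) ≤ (1 + (n₁ : ℝ)) * ((r : ℝ) - K + t) := by
    have hn1nn : (0:ℝ) ≤ (n₁ : ℝ) := Nat.cast_nonneg n₁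
    have hprod : (0:ℝ) ≤ (n₁ : ℝ) * ((t : ℝ) - n₁ - 1) :=
      mul_nonneg hn1nn (by linarith)
    have hA : (1 + (n₁ : ℝ)) * ((t : ℝ) - n₁) ≤ (1 + (n₁ : ℝ)) * ((r : ℝ) - K + t) :=
      mul_le_mul_of_nonneg_left he_lb (by linarith)
    have hexp : (1 + (n₁ : ℝ)) * ((t : ℝ) - n₁) = t + n₁ * ((t : ℝ) - n₁ - 1) := by ring
    linarith
  -- the sup' lower bound
  set f : ℕ → ℝ := fun s => (H K - H (K - q + s - 1)) * max ((r : ℝ) - K + s) 0 * M * μ / s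
    with hf_def
  have hmem : t ∈ Finset.Icc 1 q := Finset.mem_Icc.mpr ⟨ht1, htq⟩
  have hft : f t = St * ((r : ℝ) - K + t) * M * μ / t := by
    rw [hf_def]
    simp only
    rw [hemax, ← ha_def, hst]
  have hft_pos : 0 < f t := by
    rw [hft]; positivity
  have hD : f t ≤ (Finset.Icc 1 q).sup' (Finset.nonempty_Icc.mpr hq1) f :=
    Finset.le_sup' f hmem
  have hDpos : 0 < (Finset.Icc 1 q).sup' (Finset.nonempty_Icc.mpr hq1) f :=
    lt_of_lt_of_le hft_pos hD
  have hA_nonneg : 0 ≤ (M : ℝ) * r * μ * S1 / K := by positivity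
  rw [hs1]
  calc ((M : ℝ) * r * μ * S1 / K) /
      ((Finset.Icc 1 q).sup' (Finset.nonempty_Icc.mpr hq1) f)
      ≤ ((M : ℝ) * r * μ * S1 / K) / f t := by
        apply div_le_div_of_nonneg_left hA_nonneg hft_pos hD
    _ ≤ (1 + (n₁ : ℝ)) * (1 + (n₂ : ℝ)) := by
        rw [div_le_iff₀ hft_pos, hft, div_le_iff₀ hKpos]
        have hrhs : (1 + (n₁ : ℝ)) * (1 + (n₂ : ℝ)) * (St * ((r : ℝ) - K + t) * M * μ / t) * K
            = ((1 + (n₁ : ℝ)) * (1 + (n₂ : ℝ)) * (St * ((r : ℝ) - K + t) * M * μ) * K) / t := by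
          ring
        rw [hrhs, le_div_iff₀ htpos]
        have step1 : (r : ℝ) * S1 ≤ (K : ℝ) * ((1 + (n₂ : ℝ)) * St) :=
          mul_le_mul hrKR hS1_le hS1_pos.le hKpos.le
        have step2 : ((r : ℝ) * S1) * t ≤ ((K : ℝ) * ((1 + (n₂ : ℝ)) * St)) *
            ((1 + (n₁ : ℝ)) * ((r : ℝ) - K + t)) := by
          apply mul_le_mul step1 h5 htpos.le
          positivity
        calc (M : ℝ) * r * μ * S1 * t = (M * μ) * (((r : ℝ) * S1) * t) := by ring
          _ ≤ (M * μ) * (((K : ℝ) * ((1 + (n₂ : ℝ)) * St)) *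
              ((1 + (n₁ : ℝ)) * ((r : ℝ) - K + t))) :=
            mul_le_mul_of_nonneg_left step2 (by positivity)
          _ = (1 + (n₁ : ℝ)) * (1 + (n₂ : ℝ)) * (St * ((r : ℝ) - K + t) * M * μ) * K := by
            ring
end
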